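/- Let φ: F → G be a simple fold on a graph G with F = F₁ ∪ F₂ ∪ F₃, and let S ⊆ G × [0,1] be straight. Suppose that either ∂π(S) ∩ ∂φ(F₂) = ∅, or there is a neighborhood V of ∂π(S) ∩ ∂φ(F₂) in G with φ(F₂) ∩ V ⊆ π(S) ∩ V. Then S' = φ_⋆⁻¹(S) is straight, and its end set is E(S') = φ_⋆⁻¹(E(S)) \ (∂F₂ × [0,1]), where φ_⋆(x,t) = (φ(x),t). -/

import Mathlib

open Set Topology

/-- A subset of a space is *regular* if it is closed and has finitely many connected
components, each of which is non-degenerate. -/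
def IsRegularSet {G : Type*} [TopologicalSpace G] (A : Set G) : Prop :=
  IsClosed A ∧ {C : Set G | ∃ x ∈ A, C = connectedComponentIn A x}.Finite ∧
    ∀ x ∈ A, (connectedComponentIn A x).Nontrivial

/-- A point of a graph is *ordinary* (neither a branch point nor an endpoint) if it has an
open neighborhood homeomorphic to an open interval. -/
def IsOrdinaryPoint {G : Type*} [TopologicalSpace G] (x : G) : Prop :=
  ∃ U : Set G, IsOpen U ∧ x ∈ U ∧ Nonempty (U ≃ₜ Set.Ioo (0 : ℝ) 1)

/-- A topological space is a *graph* if it is a finite union of arcs which intersect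
at most in endpoints. -/
def IsGraphSpace (G : Type*) [TopologicalSpace G] : Prop :=
  ∃ (n : ℕ) (f : Fin n → unitInterval → G),
    (∀ i, Continuous (f i) ∧ Function.Injective (f i)) ∧
    (⋃ i, Set.range (f i)) = Set.univ ∧
    ∀ i j, i ≠ j →
      Set.range (f i) ∩ Set.range (f j) ⊆ ({f i 0, f i 1} : Set G) ∩ {f j 0, f j 1}

/-- A subset of a space is a *graph* if it is a finite union of arcs which intersect
at most in endpoints. -/
def IsGraphSet {E : Type*} [TopologicalSpace E] (G : Set E) : Prop :=
  ∃ (n : ℕ) (f : Fin n → unitInterval → E),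
    (∀ i, Continuous (f i) ∧ Function.Injective (f i)) ∧
    G = ⋃ i, Set.range (f i) ∧
    ∀ i j, i ≠ j →
      Set.range (f i) ∩ Set.range (f j) ⊆ ({f i 0, f i 1} : Set E) ∩ {f j 0, f j 1}

/-- `φ` restricted to `A` is a homeomorphism onto `B`. -/
def MapsHomeoOnto {F G : Type*} [TopologicalSpace F] [TopologicalSpace G]
    (φ : F → G) (A : Set F) (B : Set G) : Prop :=
  φ '' A = B ∧ Topology.IsEmbedding (A.restrict φ)

/-- A *simple fold* on `G`, with pieces `F1, F2, F3` of `F` and projection `φ : F → G`,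
satisfying properties (F1)-(F5). -/
def IsSimpleFold {F G : Type*} [TopologicalSpace F] [TopologicalSpace G]
    (φ : F → G) (F1 F2 F3 : Set F) : Prop :=
  Continuous φ ∧ F1 ∪ F2 ∪ F3 = Set.univ ∧
  -- (F1)
  ((φ '' F1).Nonempty ∧ (φ '' F2).Nonempty ∧ (φ '' F3).Nonempty) ∧
  (IsRegularSet (φ '' F1) ∧ IsRegularSet (φ '' F2) ∧ IsRegularSet (φ '' F3)) ∧
  -- (F2)
  (φ '' F1) ∪ (φ '' F3) = Set.univ ∧ (φ '' F2) = (φ '' F1) ∩ (φ '' F3) ∧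
  -- (F3)
  closure ((φ '' F1) \ (φ '' F2)) ∩ closure ((φ '' F3) \ (φ '' F2)) = ∅ ∧
  -- (F4)
  (MapsHomeoOnto φ F1 (φ '' F1) ∧ MapsHomeoOnto φ F2 (φ '' F2) ∧
    MapsHomeoOnto φ F3 (φ '' F3)) ∧
  -- (F5)
  frontier (φ '' F1) = φ '' (F1 ∩ F2) ∧ frontier (φ '' F3) = φ '' (F2 ∩ F3) ∧
  F1 ∩ F3 = ∅

/-- `S` separates `A` from `B` within `Y`: the complement `Y \ S` is the union of two
disjoint sets, relatively open in `Y \ S`, containing `A` and `B` respectively. -/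
def SeparatesWithin {E : Type*} [TopologicalSpace E] (Y S A B : Set E) : Prop :=
  ∃ U V : Set E,
    U ∪ V = Y \ S ∧ U ∩ V = ∅ ∧ A ⊆ U ∧ B ⊆ V ∧
    (∃ U', IsOpen U' ∧ U = (Y \ S) ∩ U') ∧ (∃ V', IsOpen V' ∧ V = (Y \ S) ∩ V')

/-- `A` has *consistent complement relative to* `B`: for each component `C` of the
complement of `A`, either `∂C ⊆ B` or `∂C ∩ B = ∅`. -/
def ConsistentComplement {G : Type*} [TopologicalSpace G] (A B : Set G) : Prop :=
  ∀ x ∉ A, frontier (connectedComponentIn Aᶜ x) ⊆ B ∨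
    frontier (connectedComponentIn Aᶜ x) ∩ B = ∅

/-- The *`A` side of `B`*, `σ_B(A)`: the closure of the union of all components of
`G \ B` meeting `A`. -/
def sideOf {G : Type*} [TopologicalSpace G] (B A : Set G) : Set G :=
  closure (⋃ x ∈ {x : G | x ∉ B ∧ (connectedComponentIn Bᶜ x ∩ A).Nonempty},
    connectedComponentIn Bᶜ x)

/-- A subset of `G × [0,1]` is *straight* if it is closed, the projection is injective on
it, and its projection is regular. -/
def IsStraight {G : Type*} [TopologicalSpace G] (S : Set (G × unitInterval)) : Prop :=
  IsClosed S ∧ Set.InjOn Prod.fst S ∧ IsRegularSet (Prod.fst '' S)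

/-- The *end set* of a straight set. -/
def endSet {G : Type*} [TopologicalSpace G] (S : Set (G × unitInterval)) :
    Set (G × unitInterval) :=
  S ∩ Prod.fst ⁻¹' (frontier (Prod.fst '' S))

/-- A *stairwell structure* of height `k` for `S ⊆ G × [0,1]`, given by the pieces
`Sp 1, …, Sp k` with end set decompositions `E(Sp i) = α i ∪ β i`. -/
def IsStairwell {G : Type*} [TopologicalSpace G]
    (Sp α β : ℕ → Set (G × unitInterval)) (k : ℕ) (S : Set (G × unitInterval)) : Prop :=
  1 ≤ k ∧
  -- (S1)
  (∀ i ∈ Set.Icc 1 k, (Sp i).Nonempty ∧ IsStraight (Sp i)) ∧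
  S = ⋃ i ∈ Set.Icc 1 k, Sp i ∧
  -- (S2)
  (∀ i ∈ Set.Icc 1 k, endSet (Sp i) = α i ∪ β i ∧ α i ∩ β i = ∅ ∧
    (α i).Finite ∧ (β i).Finite) ∧
  α 1 = ∅ ∧ β k = ∅ ∧ (∀ i, 1 ≤ i → i < k → β i = α (i + 1)) ∧
  -- (S3)
  (∀ i, 1 ≤ i → i < k → ∃ V : Set G, IsOpen V ∧ Prod.fst '' β i ⊆ V ∧
    Prod.fst '' Sp i ∩ V = Prod.fst '' Sp (i + 1) ∩ V) ∧
  -- (S4)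
  (∀ i ∈ Set.Icc 1 k, ConsistentComplement (Prod.fst '' Sp i) (Prod.fst '' α i) ∧
    ConsistentComplement (Prod.fst '' Sp i) (Prod.fst '' β i)) ∧
  -- (S5)
  (∀ i ∈ Set.Icc 2 k, ∀ p ∈ α i, IsOrdinaryPoint p.1) ∧
  (∀ i j, 2 ≤ i → i < j → j ≤ k → Prod.fst '' α i ∩ Prod.fst '' α j = ∅)

/-- A *broken stairwell structure* of height `k` with a pit at level `i0`. -/
def IsBrokenStairwell {G : Type*} [TopologicalSpace G]
    (Sp α β : ℕ → Set (G × unitInterval)) (γ P1 P2 : Set (G × unitInterval))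
    (k i0 : ℕ) (S : Set (G × unitInterval)) : Prop :=
  1 ≤ k ∧ 1 ≤ i0 ∧ i0 ≤ k ∧
  -- (S1')
  (∀ i ∈ Set.Icc 1 k, (Sp i).Nonempty ∧ IsStraight (Sp i)) ∧
  P1.Nonempty ∧ IsStraight P1 ∧ P2.Nonempty ∧ IsStraight P2 ∧
  S = (⋃ i ∈ Set.Icc 1 k, Sp i) ∪ P1 ∪ P2 ∧
  -- (S2')
  (∀ i ∈ Set.Icc 1 k, i ≠ i0 → endSet (Sp i) = α i ∪ β i) ∧
  endSet (Sp i0) = α i0 ∪ β i0 ∪ γ ∧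
  (∀ i ∈ Set.Icc 1 k, α i ∩ β i = ∅ ∧ (α i).Finite ∧ (β i).Finite) ∧
  γ.Finite ∧ α i0 ∩ γ = ∅ ∧ β i0 ∩ γ = ∅ ∧
  α 1 = ∅ ∧ β k = ∅ ∧ (∀ i, 1 ≤ i → i < k → β i = α (i + 1)) ∧
  endSet P2 = endSet P1 ∪ γ ∧ endSet P1 ∩ γ = ∅ ∧
  -- (S3')
  (∀ i, 1 ≤ i → i < k → ∃ V : Set G, IsOpen V ∧ Prod.fst '' β i ⊆ V ∧
    Prod.fst '' Sp i ∩ V = Prod.fst '' Sp (i + 1) ∩ V) ∧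
  (∃ V : Set G, IsOpen V ∧ Prod.fst '' endSet P1 ⊆ V ∧
    Prod.fst '' P1 ∩ V = Prod.fst '' P2 ∩ V) ∧
  (∃ W : Set G, IsOpen W ∧ Prod.fst '' γ ⊆ W ∧
    Prod.fst '' P2 ∩ W = Prod.fst '' Sp i0 ∩ W) ∧
  -- (S4')
  (∀ i ∈ Set.Icc 1 k, ConsistentComplement (Prod.fst '' Sp i) (Prod.fst '' α i) ∧
    ConsistentComplement (Prod.fst '' Sp i) (Prod.fst '' β i)) ∧
  ConsistentComplement (Prod.fst '' Sp i0) (Prod.fst '' γ) ∧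
  ConsistentComplement (Prod.fst '' P2) (Prod.fst '' endSet P1) ∧
  ConsistentComplement (Prod.fst '' P2) (Prod.fst '' γ) ∧
  -- (S5')
  (∀ i ∈ Set.Icc 2 k, ∀ p ∈ α i, IsOrdinaryPoint p.1) ∧
  (∀ p ∈ endSet P1, IsOrdinaryPoint p.1) ∧ (∀ p ∈ γ, IsOrdinaryPoint p.1) ∧
  (∀ i j, 2 ≤ i → i < j → j ≤ k → Prod.fst '' α i ∩ Prod.fst '' α j = ∅) ∧
  (∀ i ∈ Set.Icc 2 k, Prod.fst '' α i ∩ Prod.fst '' endSet P1 = ∅ ∧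
    Prod.fst '' α i ∩ Prod.fst '' γ = ∅) ∧
  Prod.fst '' endSet P1 ∩ Prod.fst '' γ = ∅ ∧
  -- (S6')
  Prod.fst '' α i0 ∩ Prod.fst '' (P1 ∪ P2) = ∅

/-- A compactum is *hereditarily indecomposable* if every non-degenerate subcontinuum is
indecomposable, i.e. is not the union of two proper subcontinua. -/
def HereditarilyIndecomposable (X : Type*) [TopologicalSpace X] : Prop :=
  ∀ K : Set X, IsCompact K → IsConnected K → K.Nontrivial →
    ¬ ∃ A B : Set X, IsCompact A ∧ IsConnected A ∧ IsCompact B ∧ IsConnected B ∧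
      A ∪ B = K ∧ A ≠ K ∧ B ≠ K

/-- A continuum is *arc-like* if for every `ε > 0` it admits an `ε`-map onto `[0,1]`. -/
def ArcLike (X : Type*) [MetricSpace X] : Prop :=
  ∀ ε > (0 : ℝ), ∃ f : X → unitInterval, Continuous f ∧ Function.Surjective f ∧
    ∀ y, Metric.diam (f ⁻¹' {y}) < ε

/-- A continuum has *span zero* if every subcontinuum `Z ⊆ X × X` with
`π₁(Z) ⊆ π₂(Z)` meets the diagonal. -/
def SpanZero (X : Type*) [TopologicalSpace X] : Prop :=
  ∀ Z : Set (X × X), IsCompact Z → IsConnected Z →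
    Prod.fst '' Z ⊆ Prod.snd '' Z → ∃ x, (x, x) ∈ Z

set_option linter.unusedSectionVars false
set_option linter.unusedVariables false

section Aux

variable {X : Type*} [TopologicalSpace X]

lemma isCompact_connectedComponentIn [T2Space X] {A : Set X} (hA : IsCompact A) (x : X) :
    IsCompact (connectedComponentIn A x) := by
  by_cases hx : x ∈ A
  · rw [connectedComponentIn_eq_image hx]
    haveI : CompactSpace A := isCompact_iff_compactSpace.mp hA
    exact (isClosed_connectedComponent.isCompact).image continuous_subtype_val
  · rw [connectedComponentIn_eq_empty hx]; exact isCompact_empty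

lemma isClosed_connectedComponentIn' [T2Space X] {A : Set X} (hA : IsCompact A) (x : X) :
    IsClosed (connectedComponentIn A x) :=
  (isCompact_connectedComponentIn hA x).isClosed

/-- Šura-Bura style separation. -/
lemma exists_isClopen_disjoint [CompactSpace X] [T2Space X] {x : X} {Fc : Set X}
    (hFc : IsClosed Fc) (h : connectedComponent x ∩ Fc = ∅) :
    ∃ E : Set X, IsClopen E ∧ x ∈ E ∧ E ∩ Fc = ∅ := by
  by_contra hcon
  push_neg at hcon
  haveI : Nonempty {E : Set X // IsClopen E ∧ x ∈ E} := ⟨⟨univ, isClopen_univ, mem_univ x⟩⟩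
  have key : (connectedComponent x ∩ Fc).Nonempty := by
    have := IsCompact.nonempty_iInter_of_directed_nonempty_isCompact_isClosed
      (ι := {E : Set X // IsClopen E ∧ x ∈ E})
      (fun E => E.1 ∩ Fc)
      ?_ ?_ ?_ ?_
    · obtain ⟨z, hz⟩ := this
      simp only [mem_iInter, mem_inter_iff] at hz
      refine ⟨z, ?_, (hz ⟨univ, isClopen_univ, mem_univ x⟩).2⟩
      rw [connectedComponent_eq_iInter_isClopen]
      exact mem_iInter.mpr fun E => (hz E).1
    · intro E E'
      exact ⟨⟨E.1 ∩ E'.1, E.2.1.inter E'.2.1, E.2.2, E'.2.2⟩,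
        inter_subset_inter_left _ inter_subset_left,
        inter_subset_inter_left _ inter_subset_right⟩
    · exact fun E => hcon E.1 E.2.1 E.2.2
    · exact fun E => (E.2.1.1.isCompact.inter_right hFc)
    · exact fun E => E.2.1.1.inter hFc
  rw [h] at key
  exact key.ne_empty rfl

/-- Boundary bumping lemma. -/
lemma bumping [T2Space X] {K D : Set X} (hK : IsCompact K) (hKc : IsPreconnected K)
    (hD : IsClosed D) {y : X} (hyK : y ∈ K) (hyD : y ∈ D) (hKD : ¬ K ⊆ D) :
    (connectedComponentIn (K ∩ D) y ∩ closure (K \ D)).Nonempty := by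
  set Z : Set X := K ∩ D with hZdef
  have hZcpt : IsCompact Z := hK.inter_right hD
  haveI : CompactSpace Z := isCompact_iff_compactSpace.mp hZcpt
  have hyZ : y ∈ Z := ⟨hyK, hyD⟩
  rw [connectedComponentIn_eq_image hyZ]
  by_contra hcon
  rw [not_nonempty_iff_eq_empty] at hcon
  set y0 : Z := ⟨y, hyZ⟩
  have hdisj : connectedComponent y0 ∩ (Subtype.val ⁻¹' closure (K \ D)) = ∅ := by
    rw [eq_empty_iff_forall_notMem]
    rintro e ⟨he1, he2⟩
    exact eq_empty_iff_forall_notMem.mp hcon e.1 ⟨mem_image_of_mem _ he1, he2⟩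
  obtain ⟨E, hEclopen, hy0E, hEdisj⟩ :=
    exists_isClopen_disjoint (isClosed_closure.preimage continuous_subtype_val) hdisj
  obtain ⟨U, hUopen, hUE⟩ := isOpen_induced_iff.mp hEclopen.2
  have hvalE_eq : Subtype.val '' E = K ∩ (U ∩ (closure (K \ D))ᶜ) := by
    apply Subset.antisymm
    · rintro _ ⟨e, heE, rfl⟩
      refine ⟨e.2.1, ?_, ?_⟩
      · rw [← hUE] at heE; exact heE
      · intro hcl
        exact eq_empty_iff_forall_notMem.mp hEdisj e ⟨heE, hcl⟩
    · rintro z ⟨hzK, hzU, hzC⟩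
      have hzD : z ∈ D := by
        by_contra hzD
        exact hzC (subset_closure ⟨hzK, hzD⟩)
      refine ⟨⟨z, hzK, hzD⟩, ?_, rfl⟩
      rw [← hUE]; exact hzU
  have hvalE_closed : IsClosed (Subtype.val '' E) := by
    have : IsCompact E := hEclopen.1.isCompact
    exact (this.image continuous_subtype_val).isClosed
  haveI : PreconnectedSpace K := Subtype.preconnectedSpace hKc
  set E' : Set K := Subtype.val ⁻¹' (Subtype.val '' E) with hE'def
  have hE'open : IsOpen E' := by
    have : E' = Subtype.val ⁻¹' (U ∩ (closure (K \ D))ᶜ) := by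
      ext w
      simp only [hE'def, mem_preimage, hvalE_eq, mem_inter_iff]
      exact ⟨fun h => h.2, fun h => ⟨w.2, h⟩⟩
    rw [this]
    exact (hUopen.inter isClosed_closure.isOpen_compl).preimage continuous_subtype_val
  have hE'closed : IsClosed E' := hvalE_closed.preimage continuous_subtype_val
  rcases isClopen_iff.mp ⟨hE'closed, hE'open⟩ with he | he
  · have : (⟨y, hyK⟩ : K) ∈ E' := by
      simp only [hE'def, mem_preimage]
      exact ⟨y0, hy0E, rfl⟩
    rw [he] at this
    exact this
  · apply hKD
    intro z hzK
    have : (⟨z, hzK⟩ : K) ∈ E' := by rw [he]; trivial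
    simp only [hE'def, mem_preimage] at this
    obtain ⟨e, _, hez⟩ := this
    have : z ∈ Z := hez ▸ e.2
    exact this.2

/-- A point of a nondegenerate preconnected set is an accumulation point of it. -/
lemma preconn_accum [T1Space X] {P : Set X} (hP : IsPreconnected P) {x : X} (hx : x ∈ P)
    (hnt : P.Nontrivial) {O : Set X} (hO : IsOpen O) (hxO : x ∈ O) :
    ∃ z ∈ P ∩ O, z ≠ x := by
  by_contra hcon
  push_neg at hcon
  have hPO : P ∩ O = {x} := by
    apply Subset.antisymm
    · intro z hz; exact hcon z hz
    · rintro z rfl; exact ⟨hx, hxO⟩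
  obtain ⟨a, ha, b, hb, hab⟩ := hnt
  have hwne : ∃ w ∈ P, w ≠ x := by
    rcases eq_or_ne a x with rfl | h
    · exact ⟨b, hb, fun hbx => hab hbx.symm⟩
    · exact ⟨a, ha, h⟩
  obtain ⟨w, hwP, hwx⟩ := hwne
  have := hP O {x}ᶜ hO isOpen_compl_singleton
    (fun z hz => by
      by_cases hzx : z = x
      · subst hzx; exact Or.inl hxO
      · exact Or.inr hzx)
    ⟨x, hx, hxO⟩ ⟨w, hwP, hwx⟩
  obtain ⟨z, hzP, hzO, hzx⟩ := this
  exact hzx (by have : z ∈ P ∩ O := ⟨hzP, hzO⟩; rwa [hPO] at this)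

/-- A finite preconnected set in a T1 space is a subsingleton. -/
lemma preconn_finite_subsingleton [T1Space X] {P : Set X} (hP : IsPreconnected P)
    (hfin : P.Finite) : P.Subsingleton := by
  intro a ha b hb
  by_contra hab
  have h1 : IsOpen ((P \ {a} : Set X)ᶜ) := ((hfin.subset diff_subset).isClosed).isOpen_compl
  have h2 : IsOpen ({a}ᶜ : Set X) := isOpen_compl_singleton
  have := hP _ _ h1 h2
    (fun z hz => by
      by_cases hza : z = a
      · exact Or.inl (by simp [hza])
      · exact Or.inr hza)
    ⟨a, ha, by simp⟩ ⟨b, hb, fun hba => hab (mem_singleton_iff.mp hba).symm⟩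
  obtain ⟨z, hzP, hz1, hz2⟩ := this
  exact hz1 ⟨hzP, hz2⟩

/-- The connected component of a point in a regular set is relatively open. -/
lemma comp_open_of_regular [T2Space X] [CompactSpace X] {A : Set X} (hA : IsRegularSet A)
    {x : X} (hx : x ∈ A) :
    ∃ O : Set X, IsOpen O ∧ x ∈ O ∧ A ∩ O ⊆ connectedComponentIn A x := by
  obtain ⟨hAcl, hfin, hnt⟩ := hA
  have hAcpt : IsCompact A := hAcl.isCompact
  set K := connectedComponentIn A x with hKdef
  have hrest : A \ K = ⋃ C ∈ {C : Set X | (∃ z ∈ A, C = connectedComponentIn A z) ∧ C ≠ K}, C := by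
    ext z
    simp only [mem_diff, mem_iUnion, mem_setOf_eq]
    constructor
    · rintro ⟨hzA, hzK⟩
      refine ⟨connectedComponentIn A z, ⟨⟨z, hzA, rfl⟩, ?_⟩, mem_connectedComponentIn hzA⟩
      intro he
      exact hzK (he ▸ mem_connectedComponentIn hzA)
    · rintro ⟨C, ⟨⟨z', hz', rfl⟩, hne⟩, hzC⟩
      refine ⟨connectedComponentIn_subset A z' hzC, fun hzK => ?_⟩
      exact hne ((connectedComponentIn_eq hzC).trans (connectedComponentIn_eq hzK).symm)
  have hclosed : IsClosed (A \ K) := by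
    rw [hrest]
    apply Set.Finite.isClosed_biUnion
    · exact hfin.subset (fun C hC => hC.1)
    · rintro C ⟨⟨z', hz', rfl⟩, _⟩
      exact isClosed_connectedComponentIn' hAcpt z'
  refine ⟨(A \ K)ᶜ, hclosed.isOpen_compl, ?_, ?_⟩
  · simp only [mem_compl_iff, mem_diff, not_and, not_not]
    intro _; exact mem_connectedComponentIn hx
  · rintro z ⟨hzA, hzO⟩
    simp only [mem_compl_iff, mem_diff, not_and, not_not] at hzO
    exact hzO hzA

section GraphLemmas

variable {X : Type*} [TopologicalSpace X] [CompactSpace X] [T2Space X]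
variable {n : ℕ} {f : Fin n → unitInterval → X}

/-- endpoint set -/
def Ep (f : Fin n → unitInterval → X) : Set X := ⋃ i, ({f i 0, f i 1} : Set X)

lemma ep_finite : (Ep f).Finite :=
  Set.finite_iUnion fun i => (Set.finite_singleton _).insert _

lemma ep_closed : IsClosed (Ep (f := f)) := (ep_finite).isClosed

variable (hf : ∀ i, Continuous (f i) ∧ Function.Injective (f i))
  (hcov : (⋃ i, Set.range (f i)) = univ)
  (hint : ∀ i j, i ≠ j →
      Set.range (f i) ∩ Set.range (f j) ⊆ ({f i 0, f i 1} : Set X) ∩ {f j 0, f j 1})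

include hf hcov hint in
lemma open_in_arc {i : Fin n} {T : Set unitInterval} (hT : IsOpen T)
    (hdisj : (f i '' T) ∩ Ep f = ∅) : IsOpen (f i '' T) := by
  have hrw : (f i '' T)ᶜ = (⋃ j ∈ ({i}ᶜ : Set (Fin n)), range (f j)) ∪ f i '' Tᶜ := by
    apply Subset.antisymm
    · intro z hz
      rcases Classical.em (z ∈ range (f i)) with ⟨v, rfl⟩ | hzr
      · exact Or.inr ⟨v, fun hvT => hz ⟨v, hvT, rfl⟩, rfl⟩
      · have : z ∈ ⋃ j, range (f j) := hcov ▸ mem_univ z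
        obtain ⟨j, hzj⟩ := mem_iUnion.mp this
        have hji : j ≠ i := fun h => hzr (h ▸ hzj)
        exact Or.inl (mem_biUnion hji hzj)
    · rintro z (hz | ⟨v, hv, rfl⟩)
      · obtain ⟨j, hji, hzj⟩ := by
          simpa only [mem_iUnion, mem_compl_iff, mem_singleton_iff, exists_prop] using hz
        intro hzi
        have : z ∈ range (f i) ∩ range (f j) := ⟨image_subset_range _ _ hzi, hzj⟩
        have hep : z ∈ Ep f := mem_iUnion.mpr ⟨i, (hint i j (fun h => hji h.symm) this).1⟩
        exact eq_empty_iff_forall_notMem.mp hdisj z ⟨hzi, hep⟩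
      · rintro ⟨w, hwT, hw⟩
        exact hv (((hf i).2 hw) ▸ hwT)
  have hclosed : IsClosed ((f i '' T)ᶜ) := by
    rw [hrw]
    apply IsClosed.union
    · exact (Set.toFinite _).isClosed_biUnion fun j _ => (isCompact_range (hf j).1).isClosed
    · exact ((hT.isClosed_compl.isCompact).image (hf i).1).isClosed
  rw [← compl_compl (f i '' T)]
  exact hclosed.isOpen_compl

lemma cball_pc (t : unitInterval) (δ : ℝ) : IsPreconnected (Metric.closedBall t δ) := by
  rcases lt_or_ge δ 0 with hδ | hδ
  · rw [Metric.closedBall_eq_empty.mpr hδ]; exact isPreconnected_empty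
  · have heq : Metric.closedBall t δ =
        Set.projIcc (0:ℝ) 1 zero_le_one '' Set.Icc (t.1 - δ) (t.1 + δ) := by
      ext v
      simp only [Metric.mem_closedBall, mem_image]
      constructor
      · intro hv
        refine ⟨v.1, ?_, ?_⟩
        · rw [Subtype.dist_eq, Real.dist_eq] at hv
          exact abs_le.mp hv |>.imp (fun h => by linarith) (fun h => by linarith)
        · exact Set.projIcc_val zero_le_one v
      · rintro ⟨r, ⟨hr1, hr2⟩, rfl⟩
        rw [Subtype.dist_eq, Real.dist_eq]
        have ht0 : (0:ℝ) ≤ t.1 := t.2.1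
        have ht1 : t.1 ≤ 1 := t.2.2
        have hproj : (Set.projIcc (0:ℝ) 1 zero_le_one r).1 = max 0 (min 1 r) := rfl
        rw [hproj, abs_le]
        constructor
        · rcases le_total (t.1 - δ) 0 with h | h
          · have : (0:ℝ) ≤ max 0 (min 1 r) := le_max_left _ _
            linarith
          · have h1 : t.1 - δ ≤ min 1 r := le_min (by linarith) hr1
            have : min 1 r ≤ max 0 (min 1 r) := le_max_right _ _
            linarith
        · have h1 : max 0 (min 1 r) ≤ max 0 r := by
            exact max_le_max le_rfl (min_le_right _ _)
          rcases le_total r 0 with h | h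
          · have : max 0 (min 1 r) ≤ 0 := max_le le_rfl (le_trans (min_le_right _ _) h)
            linarith
          · have : max 0 r = r := max_eq_right h
            have h2 : max 0 (min 1 r) ≤ r := h1.trans this.le
            linarith
    rw [heq]
    exact (isPreconnected_Icc).image _ (continuous_projIcc.continuousOn)

lemma sphere_fin (t : unitInterval) (δ : ℝ) : {v : unitInterval | dist v t = δ}.Finite := by
  have hsub : {v : unitInterval | dist v t = δ} ⊆
      Subtype.val ⁻¹' ({t.1 - δ, t.1 + δ} : Set ℝ) := by
    intro v hv
    simp only [mem_setOf_eq, Subtype.dist_eq, Real.dist_eq] at hv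
    have hd0 : 0 ≤ δ := hv ▸ abs_nonneg _
    rcases (abs_eq hd0).mp hv with h | h
    · simp only [mem_preimage, mem_insert_iff, mem_singleton_iff]
      right; linarith
    · simp only [mem_preimage, mem_insert_iff, mem_singleton_iff]
      left; linarith
  exact (Set.Finite.preimage (Subtype.val_injective.injOn) (by
    exact (Set.finite_singleton _).insert _)).subset hsub

include hf in
lemma star_choice (x : X) {W : Set X} (hW : IsOpen W) (hxW : x ∈ W)
    (u : Fin n → unitInterval) (hu : ∀ i, x ∈ range (f i) → f i (u i) = x) :
    ∃ δ : ℝ, 0 < δ ∧ ∀ i, x ∈ range (f i) →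
      f i '' Metric.closedBall (u i) δ ⊆ W ∩ (Ep f \ {x})ᶜ := by
  have hchoice : ∀ i : Fin n, ∃ d : ℝ, 0 < d ∧ (x ∈ range (f i) →
      f i '' Metric.closedBall (u i) d ⊆ W ∩ (Ep f \ {x})ᶜ) := by
    intro i
    rcases Classical.em (x ∈ range (f i)) with hxi | hxi
    · have hopen : IsOpen (W ∩ (Ep f \ {x})ᶜ) :=
        hW.inter ((ep_finite.subset diff_subset).isClosed).isOpen_compl
    
      have hmem : u i ∈ f i ⁻¹' (W ∩ (Ep f \ {x})ᶜ) := by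
        rw [mem_preimage, hu i hxi]
        exact ⟨hxW, fun hc => hc.2 rfl⟩
      obtain ⟨ε, hε, hball⟩ := Metric.isOpen_iff.mp (hopen.preimage (hf i).1) _ hmem
      refine ⟨ε/2, by linarith, fun _ => ?_⟩
      rintro z ⟨v, hv, rfl⟩
      exact hball (lt_of_le_of_lt (Metric.mem_closedBall.mp hv) (by linarith))
    · exact ⟨1, one_pos, fun h => absurd h hxi⟩
  choose d hd0 hdP using hchoice
  rcases Nat.eq_zero_or_pos n with hn | hn
  · exact ⟨1, one_pos, fun i => by subst hn; exact i.elim0⟩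
  · haveI : Nonempty (Fin n) := ⟨⟨0, hn⟩⟩
    refine ⟨Finset.univ.inf' Finset.univ_nonempty d, ?_, ?_⟩
    · exact (Finset.lt_inf'_iff _).mpr fun i _ => hd0 i
    · intro i hxi
      refine subset_trans (image_mono ?_) (hdP i hxi)
      exact Metric.closedBall_subset_closedBall (Finset.inf'_le _ (Finset.mem_univ i))

include hf hcov in
lemma rem_cover (x : X) (u : Fin n → unitInterval)
    (hu : ∀ i, x ∈ range (f i) → f i (u i) = x) {δ : ℝ} (hδ : 0 < δ) :
    ∃ O : Set X, IsOpen O ∧ x ∈ O ∧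
      ∀ z ∈ O, ∃ i, x ∈ range (f i) ∧ ∃ v, f i v = z ∧ dist v (u i) < δ := by
  classical
  set Rem : Fin n → Set X := fun j =>
    if x ∈ range (f j) then f j '' {v | δ ≤ dist v (u j)} else range (f j) with hRem
  have hRemClosed : ∀ j, IsClosed (Rem j) := by
    intro j
    simp only [hRem]
    split_ifs
    · refine IsCompact.isClosed (IsCompact.image ?_ (hf j).1)
      exact (isClosed_le continuous_const ((continuous_id.dist continuous_const))).isCompact
    · exact (isCompact_range (hf j).1).isClosed
  refine ⟨(⋃ j, Rem j)ᶜ, (isClosed_iUnion_of_finite hRemClosed).isOpen_compl, ?_, ?_⟩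
  · simp only [mem_compl_iff, mem_iUnion, not_exists]
    intro j hj
    simp only [hRem] at hj
    split_ifs at hj with hxj
    · obtain ⟨v, hv, hfv⟩ := hj
      have : v = u j := (hf j).2 (hfv.trans (hu j hxj).symm)
      rw [this] at hv
      simp only [mem_setOf_eq, dist_self] at hv
      linarith
    · exact hxj hj
  · intro z hz
    have : z ∈ ⋃ i, range (f i) := hcov ▸ mem_univ z
    obtain ⟨j, v, hv⟩ := by simpa only [mem_iUnion] using this
    simp only [mem_compl_iff, mem_iUnion, not_exists] at hz
    have hzj := hz j
    simp only [hRem] at hzj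
    split_ifs at hzj with hxj
    · refine ⟨j, hxj, v, hv, ?_⟩
      by_contra hge
      exact hzj ⟨v, le_of_not_gt hge, hv⟩
    · exact absurd ⟨v, hv⟩ hzj

include hf hcov hint in
lemma graph_wlc (x : X) {W : Set X} (hW : IsOpen W) (hxW : x ∈ W) :
    ∃ T, IsPreconnected T ∧ x ∈ T ∧ T ⊆ W ∧ ∃ O, IsOpen O ∧ x ∈ O ∧ O ⊆ T := by
  classical
  set u : Fin n → unitInterval := fun i =>
    if h : x ∈ range (f i) then h.choose else 0 with hudef
  have hu : ∀ i, x ∈ range (f i) → f i (u i) = x := by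
    intro i hi
    rw [hudef]
    simp only [hi, dif_pos]
    exact hi.choose_spec
  obtain ⟨δ, hδ0, hδ⟩ := star_choice hf x hW hxW u hu
  obtain ⟨i₀, hi₀⟩ := mem_iUnion.mp (hcov ▸ mem_univ x)
  set T : Set X := ⋃ i, (if x ∈ range (f i) then f i '' Metric.closedBall (u i) δ else {x})
    with hT
  have hxmem : ∀ i, x ∈ range (f i) → x ∈ f i '' Metric.closedBall (u i) δ := fun i hi =>
    ⟨u i, Metric.mem_closedBall.mpr (by rw [dist_self]; linarith), hu i hi⟩
  have hTpc : IsPreconnected T := by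
    apply isPreconnected_iUnion
    · refine ⟨x, mem_iInter.mpr fun i => ?_⟩
      split_ifs with hi
      · exact hxmem i hi
      · exact rfl
    · intro i
      split_ifs with hi
      · exact (cball_pc (u i) δ).image _ (hf i).1.continuousOn
      · exact isPreconnected_singleton
  have hxT : x ∈ T := by
    refine mem_iUnion.mpr ⟨i₀, ?_⟩
    rw [if_pos hi₀]
    exact hxmem i₀ hi₀
  have hTW : T ⊆ W := by
    intro z hz
    obtain ⟨i, hzi⟩ := mem_iUnion.mp hz
    split_ifs at hzi with hi
    · exact ((hδ i hi) hzi).1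
    · exact hzi ▸ hxW
  obtain ⟨O, hOopen, hxO, hOprop⟩ := rem_cover hf hcov x u hu hδ0
  refine ⟨T, hTpc, hxT, hTW, O, hOopen, hxO, ?_⟩
  intro z hz
  obtain ⟨i, hxi, v, hfv, hdist⟩ := hOprop z hz
  refine mem_iUnion.mpr ⟨i, ?_⟩
  rw [if_pos hxi]
  exact ⟨v, Metric.mem_closedBall.mpr hdist.le, hfv⟩

include hf hcov hint in
lemma piece_interior {i : Fin n} {x : X} {u : unitInterval} {δ : ℝ}
    (hui : f i u = x) (hJ : f i '' Metric.closedBall u δ ⊆ (Ep f \ {x})ᶜ)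
    {p : X} {v : unitInterval} (hpv : f i v = p) (hvd : dist v u < δ) (hpx : p ≠ x) :
    ∃ Op, IsOpen Op ∧ p ∈ Op ∧ Op ⊆ f i '' Metric.closedBall u δ := by
  set T : Set unitInterval := Metric.ball u δ \ {u} with hTdef
  have hTopen : IsOpen T := Metric.isOpen_ball.sdiff isClosed_singleton
  have hvT : v ∈ T := by
    refine ⟨Metric.mem_ball.mpr hvd, ?_⟩
    simp only [mem_singleton_iff]
    rintro rfl
    exact hpx (hpv ▸ hui ▸ rfl)
  have hsub : f i '' T ⊆ f i '' Metric.closedBall u δ :=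
    image_mono (fun w hw => Metric.mem_closedBall.mpr (Metric.mem_ball.mp hw.1).le)
  have hdisj : (f i '' T) ∩ Ep f = ∅ := by
    rw [eq_empty_iff_forall_notMem]
    rintro z ⟨⟨w, hwT, rfl⟩, hzEp⟩
    have h1 : f i w ∈ (Ep f \ {x})ᶜ := hJ (hsub ⟨w, hwT, rfl⟩ : _)
    have h2 : f i w ≠ x := by
      intro he
      exact hwT.2 ((hf i).2 (he.trans hui.symm))
    exact h1 ⟨hzEp, h2⟩
  exact ⟨f i '' T, open_in_arc hf hcov hint hTopen hdisj, ⟨v, hvT, hpv⟩, hsub⟩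

include hf hcov hint in
lemma closure_out {i : Fin n} {x : X} {u : unitInterval} {δ : ℝ}
    (hui : f i u = x) (hJ : f i '' Metric.closedBall u δ ⊆ (Ep f \ {x})ᶜ)
    {K : Set X} {p : X} (hp : p ∈ closure (K \ f i '' Metric.closedBall u δ))
    (hpJ : p ∈ f i '' Metric.closedBall u δ) :
    p = x ∨ p ∈ f i '' {v : unitInterval | dist v u = δ} := by
  by_contra hcon
  push_neg at hcon
  obtain ⟨hpx, hpS⟩ := hcon
  obtain ⟨v, hv, hpv⟩ := hpJ
  have hvd : dist v u < δ := by
    rcases lt_or_eq_of_le (Metric.mem_closedBall.mp hv) with h | h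
    · exact h
    · exact absurd ⟨v, h, hpv⟩ hpS
  obtain ⟨Op, hOpen, hpOp, hOsub⟩ := piece_interior hf hcov hint hui hJ hpv hvd hpx
  obtain ⟨z, hzOp, hzK, hzJ⟩ := mem_closure_iff.mp hp Op hOpen hpOp
  exact hzJ (hOsub hzOp)

include hf hcov hint in
lemma graph_nfc {U P : Set X} (hU : IsOpen U) (hP : IsPreconnected P)
    (hPf : P ⊆ frontier U) : P.Subsingleton := by
  by_contra hcon
  obtain ⟨a, ha, b, hb, hab⟩ := Set.not_subsingleton_iff.mp hcon
  have hfe : interior (frontier U) = ∅ := by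
    rw [← frontier_compl]
    exact interior_frontier hU.isClosed_compl
  have hPEp : ¬ P ⊆ Ep f := by
    intro hsub
    exact hab (preconn_finite_subsingleton hP (ep_finite.subset hsub) ha hb)
  obtain ⟨p, hpP, hpEp⟩ := not_subset.mp hPEp
  obtain ⟨i, v0, hv0⟩ := by simpa only [mem_iUnion] using (hcov ▸ mem_univ p :
    p ∈ ⋃ i, range (f i))
  classical
  set u : Fin n → unitInterval := fun j =>
    if h : p ∈ range (f j) then h.choose else 0 with hudef
  have hu : ∀ j, p ∈ range (f j) → f j (u j) = p := by
    intro j hj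
    rw [hudef]; simp only [hj, dif_pos]; exact hj.choose_spec
  obtain ⟨δ, hδ0, hδ⟩ := star_choice hf p isOpen_univ (mem_univ p) u hu
  have hpi : p ∈ range (f i) := ⟨v0, hv0⟩
  set J : Set X := f i '' Metric.closedBall (u i) δ with hJdef
  have hJsub : J ⊆ (Ep f \ {p})ᶜ := fun z hz => ((hδ i hpi) hz).2
  have hJEp : J ∩ Ep f = ∅ := by
    rw [eq_empty_iff_forall_notMem]
    rintro z ⟨hzJ, hzEp⟩
    rcases Classical.em (z = p) with rfl | hne
    · exact hpEp hzEp
    · exact (hJsub hzJ) ⟨hzEp, hne⟩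
  have hJclosed : IsClosed J := ((isCompact_closedBall _ _).image (hf i).1).isClosed
  have hpJ : p ∈ J := ⟨u i, Metric.mem_closedBall.mpr (by rw [dist_self]; linarith),
    hu i hpi⟩
  set K : Set X := closure P with hKdef
  have hKcpt : IsCompact K := isClosed_closure.isCompact
  have hKpc : IsPreconnected K := hP.closure
  have hKf : K ⊆ frontier U := closure_minimal hPf isClosed_frontier
  -- get a nondegenerate preconnected Q inside J ∩ frontier U
  obtain ⟨Q, hQpc, hQnt, hQJ, hQf⟩ :
      ∃ Q : Set X, IsPreconnected Q ∧ Q.Nontrivial ∧ Q ⊆ J ∧ Q ⊆ frontier U := by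
    rcases Classical.em (K ⊆ J) with hKJ | hKJ
    · exact ⟨K, hKpc, ⟨a, subset_closure ha, b, subset_closure hb, hab⟩, hKJ, hKf⟩
    · obtain ⟨w, hwC, hwcl⟩ := bumping hKcpt hKpc hJclosed (subset_closure hpP) hpJ hKJ
      refine ⟨connectedComponentIn (K ∩ J) p, isPreconnected_connectedComponentIn,
        ⟨w, hwC, p, mem_connectedComponentIn ⟨subset_closure hpP, hpJ⟩, ?_⟩,
        (connectedComponentIn_subset _ _).trans inter_subset_right,
        (connectedComponentIn_subset _ _).trans (inter_subset_left.trans hKf)⟩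
      -- w ≠ p
      intro hwp
      rw [hwp] at hwcl
      -- p has a neighborhood inside J
      have : ∃ Op, IsOpen Op ∧ p ∈ Op ∧ Op ⊆ J := by
        refine ⟨f i '' Metric.ball (u i) δ, ?_, ?_, ?_⟩
        · apply open_in_arc hf hcov hint Metric.isOpen_ball
          rw [eq_empty_iff_forall_notMem]
          rintro z ⟨hz1, hz2⟩
          have : z ∈ J := image_mono Metric.ball_subset_closedBall hz1
          exact eq_empty_iff_forall_notMem.mp hJEp z ⟨this, hz2⟩
        · exact ⟨u i, Metric.mem_ball.mpr (by rw [dist_self]; linarith), hu i hpi⟩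
        · exact image_mono Metric.ball_subset_closedBall
      obtain ⟨Op, hOpen, hpOp, hOsub⟩ := this
      obtain ⟨z, hzOp, hzK, hzJ⟩ := mem_closure_iff.mp hwcl Op hOpen hpOp
      exact hzJ (hOsub hzOp)
  -- now extract an open subset of Q, contradiction with empty interior of frontier
  have hQpre : IsPreconnected (f i ⁻¹' Q) := by
    have hemb : IsInducing (f i) := ((hf i).1.isClosedEmbedding (hf i).2).toIsInducing
    rw [← hemb.isPreconnected_image]
    rwa [image_preimage_eq_of_subset (hQJ.trans (image_subset_range _ _))]
  have hRpc : IsPreconnected (Subtype.val '' (f i ⁻¹' Q) : Set ℝ) :=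
    hQpre.image _ continuous_subtype_val.continuousOn
  obtain ⟨qa, hqa, qb, hqb, hqab⟩ := hQnt
  obtain ⟨va, hva, hfa⟩ := hQJ hqa
  obtain ⟨vb, hvb, hfb⟩ := hQJ hqb
  have hvab : (va : ℝ) ≠ (vb : ℝ) := by
    intro he
    exact hqab (hfa ▸ hfb ▸ congrArg (f i) (Subtype.ext he))
  set ra : ℝ := min va.1 vb.1
  set rb : ℝ := max va.1 vb.1
  have hrab : ra < rb := min_lt_max.mpr hvab
  have hmemR : ∀ r, r ∈ Set.Icc ra rb → r ∈ (Subtype.val '' (f i ⁻¹' Q) : Set ℝ) := by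
    intro r hr
    have hra : ra ∈ (Subtype.val '' (f i ⁻¹' Q) : Set ℝ) := by
      rcases min_cases va.1 vb.1 with ⟨he, _⟩ | ⟨he, _⟩
      · exact ⟨va, by rwa [mem_preimage, hfa], he.symm ▸ rfl⟩
      · exact ⟨vb, by rwa [mem_preimage, hfb], he.symm ▸ rfl⟩
    have hrb : rb ∈ (Subtype.val '' (f i ⁻¹' Q) : Set ℝ) := by
      rcases max_cases va.1 vb.1 with ⟨he, _⟩ | ⟨he, _⟩
      · exact ⟨va, by rwa [mem_preimage, hfa], he.symm ▸ rfl⟩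
      · exact ⟨vb, by rwa [mem_preimage, hfb], he.symm ▸ rfl⟩
    exact hRpc.ordConnected.out hra hrb hr
  set tu : ℝ := (u i).1
  obtain ⟨c, d, hcd, hsub2, htu⟩ : ∃ c d : ℝ, c < d ∧ Set.Ioo c d ⊆ Set.Icc ra rb ∧
      tu ∉ Set.Ioo c d := by
    rcases le_or_gt tu ra with h | h
    · exact ⟨ra, rb, hrab, Set.Ioo_subset_Icc_self, fun hc => absurd hc.1 (not_lt.mpr h)⟩
    · rcases le_or_gt rb tu with h2 | h2
      · exact ⟨ra, rb, hrab, Set.Ioo_subset_Icc_self, fun hc => absurd hc.2 (not_lt.mpr h2)⟩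
      · exact ⟨ra, tu, h, fun r hr => ⟨hr.1.le, hr.2.le.trans h2.le⟩,
          fun hc => lt_irrefl tu hc.2⟩
  set T0 : Set unitInterval := Subtype.val ⁻¹' Set.Ioo c d with hT0
  have hT0open : IsOpen T0 := isOpen_Ioo.preimage continuous_subtype_val
  have himgQ : f i '' T0 ⊆ Q := by
    rintro z ⟨w, hw, rfl⟩
    obtain ⟨w', hw', hww⟩ := hmemR w.1 (hsub2 hw)
    rwa [show w = w' from Subtype.ext hww.symm]
  have hne : (f i '' T0).Nonempty := by
    have hmid : (c + d) / 2 ∈ Set.Ioo c d := ⟨by linarith, by linarith⟩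
    obtain ⟨w', hw', hww⟩ := hmemR _ (hsub2 hmid)
    exact ⟨f i w', ⟨w', by rwa [hT0, mem_preimage, hww], rfl⟩⟩
  have hopen : IsOpen (f i '' T0) := by
    apply open_in_arc hf hcov hint hT0open
    rw [eq_empty_iff_forall_notMem]
    rintro z ⟨hz1, hz2⟩
    exact eq_empty_iff_forall_notMem.mp hJEp z ⟨hQJ (himgQ hz1), hz2⟩
  have : f i '' T0 ⊆ interior (frontier U) :=
    fun z hz => interior_maximal (himgQ.trans hQf) hopen hz
  rw [hfe] at this
  exact (this hne.choose_spec).elim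

include hf hcov hint in
lemma graph_mgl {A : Set X} (hA : IsRegularSet A) {x : X} (hx : x ∈ A)
    {W : Set X} (hW : IsOpen W) (hxW : x ∈ W) :
    ∃ T, IsPreconnected T ∧ x ∈ T ∧ T ⊆ A ∩ W ∧
      ∃ O, IsOpen O ∧ x ∈ O ∧ A ∩ O ⊆ T := by
  classical
  set u : Fin n → unitInterval := fun i =>
    if h : x ∈ range (f i) then h.choose else 0 with hudef
  have hu : ∀ i, x ∈ range (f i) → f i (u i) = x := by
    intro i hi
    rw [hudef]; simp only [hi, dif_pos]; exact hi.choose_spec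
  obtain ⟨δ, hδ0, hδ⟩ := star_choice hf x hW hxW u hu
  obtain ⟨i₀, hi₀⟩ := mem_iUnion.mp (hcov ▸ mem_univ x)
  set J : Fin n → Set X := fun i => f i '' Metric.closedBall (u i) δ with hJdef
  have hJW : ∀ i, x ∈ range (f i) → J i ⊆ W := fun i hi z hz => ((hδ i hi) hz).1
  have hJEp : ∀ i, x ∈ range (f i) → J i ⊆ (Ep f \ {x})ᶜ := fun i hi z hz => ((hδ i hi) hz).2
  have hJclosed : ∀ i, IsClosed (J i) :=
    fun i => ((isCompact_closedBall _ _).image (hf i).1).isClosed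
  have hxJ : ∀ i, x ∈ range (f i) → x ∈ J i := fun i hi =>
    ⟨u i, Metric.mem_closedBall.mpr (by rw [dist_self]; linarith), hu i hi⟩
  set Nb : Set X := ⋃ i, (if x ∈ range (f i) then J i else ∅) with hNb
  have hNbW : Nb ⊆ W := by
    intro z hz
    obtain ⟨i, hzi⟩ := mem_iUnion.mp hz
    split_ifs at hzi with hi
    · exact hJW i hi hzi
    · exact hzi.elim
  have hJNb : ∀ i, x ∈ range (f i) → J i ⊆ Nb := by
    intro i hi z hz
    exact mem_iUnion.mpr ⟨i, by rw [if_pos hi]; exact hz⟩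
  have hxNb : x ∈ Nb := hJNb i₀ hi₀ (hxJ i₀ hi₀)
  set K : Set X := connectedComponentIn A x with hK
  have hKA : K ⊆ A := connectedComponentIn_subset _ _
  have hKcpt : IsCompact K := isCompact_connectedComponentIn hA.1.isCompact x
  have hKpc : IsPreconnected K := isPreconnected_connectedComponentIn
  have hxK : x ∈ K := mem_connectedComponentIn hx
  obtain ⟨OK, hOKopen, hxOK, hOKsub⟩ := comp_open_of_regular hA hx
  set T : Set X := connectedComponentIn (K ∩ Nb) x with hT
  set B : Set X := ⋃ i, (if x ∈ range (f i) then
      ⋃ q ∈ {q | q ∈ f i '' {v : unitInterval | dist v (u i) = δ} ∧ q ∈ K ∩ J i ∧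
        x ∉ connectedComponentIn (K ∩ J i) q}, connectedComponentIn (K ∩ J i) q
    else ∅) with hB
  have hBclosed : IsClosed B := by
    apply isClosed_iUnion_of_finite
    intro i
    split_ifs with hi
    · apply Set.Finite.isClosed_biUnion
      · exact (((sphere_fin (u i) δ).image (f i)).subset (fun q hq => hq.1))
      · rintro q ⟨hq1, hq2, hq3⟩
        exact isClosed_connectedComponentIn' (hKcpt.inter_right (hJclosed i)) q
    · exact isClosed_empty
  have hxB : x ∉ B := by
    intro hxB
    obtain ⟨i, hxi⟩ := mem_iUnion.mp hxB
    split_ifs at hxi with hi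
    · obtain ⟨q, ⟨hq1, hq2, hq3⟩, hq4⟩ := by
        simpa only [mem_iUnion, exists_prop] using hxi
      exact hq3 hq4
    · exact hxi.elim
  obtain ⟨Orem, hOremOpen, hxOrem, hOrem⟩ := rem_cover hf hcov x u hu hδ0
  refine ⟨T, isPreconnected_connectedComponentIn, mem_connectedComponentIn ⟨hxK, hxNb⟩,
    (connectedComponentIn_subset _ _).trans
      (fun z hz => ⟨hKA hz.1, hNbW hz.2⟩), OK ∩ (Orem ∩ Bᶜ),
    hOKopen.inter (hOremOpen.inter hBclosed.isOpen_compl), ⟨hxOK, hxOrem, hxB⟩, ?_⟩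
  rintro z ⟨hzA, hzOK, hzOrem, hzB⟩
  have hzK : z ∈ K := hOKsub ⟨hzA, hzOK⟩
  obtain ⟨j, hxj, v, hfv, hvd⟩ := hOrem z hzOrem
  have hzJ : z ∈ J j := ⟨v, Metric.mem_closedBall.mpr hvd.le, hfv⟩
  rcases Classical.em (K ⊆ J j) with hKJ | hKJ
  · exact hKpc.subset_connectedComponentIn hxK
      (subset_inter Subset.rfl ((hKJ).trans (hJNb j hxj))) hzK
  · obtain ⟨w, hwC, hwcl⟩ := bumping hKcpt hKpc (hJclosed j) hzK hzJ hKJ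
    have hwJ : w ∈ J j := (connectedComponentIn_subset _ _ hwC).2
    have hzC : z ∈ connectedComponentIn (K ∩ J j) z := mem_connectedComponentIn ⟨hzK, hzJ⟩
    rcases closure_out hf hcov hint (hu j hxj) (hJEp j hxj) hwcl hwJ with hwx | hwS
    · -- w = x, so the component of z contains x
      have hsubT : connectedComponentIn (K ∩ J j) z ⊆ T := by
        apply IsPreconnected.subset_connectedComponentIn isPreconnected_connectedComponentIn
        · rw [← hwx]; exact hwC
        · exact (connectedComponentIn_subset _ _).trans
            (inter_subset_inter_right _ (hJNb j hxj))
      exact hsubT hzC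
    · have heq := connectedComponentIn_eq hwC
      rcases Classical.em (x ∈ connectedComponentIn (K ∩ J j) w) with hxw | hxw
      · have hsubT : connectedComponentIn (K ∩ J j) w ⊆ T := by
          apply IsPreconnected.subset_connectedComponentIn isPreconnected_connectedComponentIn
            hxw
          exact (connectedComponentIn_subset _ _).trans
            (inter_subset_inter_right _ (hJNb j hxj))
        exact hsubT (heq ▸ hzC)
      · exfalso
        apply hzB
        refine mem_iUnion.mpr ⟨j, ?_⟩
        rw [if_pos hxj]
        refine mem_biUnion ?_ (heq ▸ hzC)
        exact ⟨hwS, ⟨(connectedComponentIn_subset _ _ hwC).1, hwJ⟩, hxw⟩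

end GraphLemmas

section Fold

lemma graph_exists_ne {X : Type*} [TopologicalSpace X] [T2Space X]
    (hX : IsGraphSpace X) (x : X) {O : Set X} (hO : IsOpen O) (hxO : x ∈ O) :
    ∃ z ∈ O, z ≠ x := by
  obtain ⟨n, f, hf, hcov, hint⟩ := hX
  obtain ⟨i, hi⟩ := mem_iUnion.mp (hcov ▸ mem_univ x)
  have hpc : IsPreconnected (range (f i)) := by
    rw [← image_univ]
    exact (isPreconnected_univ).image _ (hf i).1.continuousOn
  have hnt : (range (f i)).Nontrivial := by
    refine ⟨f i 0, ⟨0, rfl⟩, f i 1, ⟨1, rfl⟩, ?_⟩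
    intro he
    have h01 : (0 : unitInterval) = 1 := (hf i).2 he
    exact zero_ne_one (congrArg Subtype.val h01)
  obtain ⟨z, ⟨hz1, hz2⟩, hz3⟩ := preconn_accum hpc hi hnt hO hxO
  exact ⟨z, hz2, hz3⟩

lemma section_of_embedding {F G : Type*} [TopologicalSpace F] [TopologicalSpace G]
    [CompactSpace F] [CompactSpace G] [T2Space F] [T2Space G]
    {φ : F → G} {Fi : Set F} (hφ : Continuous φ)
    (hemb : Topology.IsEmbedding (Fi.restrict φ)) (hcl : IsClosed (φ '' Fi))
    (hne : (φ '' Fi).Nonempty) :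
    ∃ σ : G → F, ContinuousOn σ (φ '' Fi) ∧ (∀ z ∈ φ '' Fi, σ z ∈ Fi ∧ φ (σ z) = z) ∧
      (∀ w ∈ Fi, σ (φ w) = w) ∧ IsClosed Fi := by
  classical
  have hrange : range (Fi.restrict φ) = φ '' Fi := Set.range_restrict φ Fi
  have hcptuniv : IsCompact (univ : Set ↥Fi) := by
    rw [hemb.isCompact_iff, image_univ, hrange]
    exact hcl.isCompact
  have hFicpt : IsCompact Fi := isCompact_iff_isCompact_univ.mpr hcptuniv
  haveI : CompactSpace ↥Fi := isCompact_iff_compactSpace.mp hFicpt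
  have hsurj : ∀ z : ↥(φ '' Fi), ∃ w : ↥Fi, φ w.1 = z.1 := by
    rintro ⟨z, w, hw, rfl⟩
    exact ⟨⟨w, hw⟩, rfl⟩
  set E : ↥Fi ≃ ↥(φ '' Fi) := Equiv.ofBijective
    (fun w => ⟨φ w.1, ⟨w.1, w.2, rfl⟩⟩)
    ⟨fun w w' hww => by
        apply hemb.injective
        exact Subtype.ext_iff.mp hww,
      fun z => by
        obtain ⟨w, hw⟩ := hsurj z
        exact ⟨w, Subtype.ext hw⟩⟩ with hE
  have hEcont : Continuous (E : ↥Fi → ↥(φ '' Fi)) :=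
    Continuous.subtype_mk (hφ.comp continuous_subtype_val) _
  set H : ↥Fi ≃ₜ ↥(φ '' Fi) := hEcont.homeoOfEquivCompactToT2 with hH
  have hHval : ∀ w : ↥Fi, (H w).1 = φ w.1 := fun w => rfl
  obtain ⟨z0, w0, hw0, _⟩ := hne
  set σ : G → F := fun z => if hz : z ∈ φ '' Fi then (H.symm ⟨z, hz⟩).1 else w0 with hσ
  have hσmem : ∀ z ∈ φ '' Fi, σ z ∈ Fi ∧ φ (σ z) = z := by
    intro z hz
    rw [hσ]
    simp only [dif_pos hz]
    refine ⟨(H.symm ⟨z, hz⟩).2, ?_⟩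
    have := hHval (H.symm ⟨z, hz⟩)
    rw [H.apply_symm_apply] at this
    exact this.symm
  have hσφ : ∀ w ∈ Fi, σ (φ w) = w := by
    intro w hw
    have hz : φ w ∈ φ '' Fi := ⟨w, hw, rfl⟩
    rw [hσ]
    simp only [dif_pos hz]
    have : (⟨φ w, hz⟩ : ↥(φ '' Fi)) = H ⟨w, hw⟩ := Subtype.ext (hHval ⟨w, hw⟩).symm
    rw [this, H.symm_apply_apply]
  refine ⟨σ, ?_, hσmem, hσφ, hFicpt.isClosed⟩
  rw [continuousOn_iff_continuous_restrict]
  have : (φ '' Fi).domRestrict σ = Subtype.val ∘ H.symm := by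
    funext z
    simp only [domRestrict, Function.comp_apply, hσ, dif_pos z.2]
  rw [this]
  exact continuous_subtype_val.comp H.symm.continuous

end Fold
lemma mk_good_piece {F G : Type*} [TopologicalSpace F] [TopologicalSpace G]
    {φ : F → G} {Fi : Set F} {σ : G → F}
    (hσc : ContinuousOn σ (φ '' Fi)) (hσm : ∀ z ∈ φ '' Fi, σ z ∈ Fi ∧ φ (σ z) = z)
    (hσf : ∀ w ∈ Fi, σ (φ w) = w)
    {x : F} (hxFi : x ∈ Fi) {U0 : Set F} (hU0 : IsOpen U0) (hxU0 : x ∈ U0) (hU0s : U0 ⊆ Fi)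
    (hφcont : Continuous φ) (hyint : φ x ∈ interior (φ '' Fi)) :
    ∃ (B : Set F) (C : Set G), IsOpen B ∧ x ∈ B ∧ IsOpen C ∧ φ '' B = C ∧
      ContinuousOn σ C ∧ (∀ z ∈ C, φ (σ z) = z) ∧ (∀ w ∈ B, σ (φ w) = w) := by
  set B : Set F := U0 ∩ φ ⁻¹' (interior (φ '' Fi)) with hBdef
  have hBopen : IsOpen B := hU0.inter (isOpen_interior.preimage hφcont)
  have hxB : x ∈ B := ⟨hxU0, hyint⟩
  have hBFi : B ⊆ Fi := inter_subset_left.trans hU0s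
  obtain ⟨u, huopen, hueq⟩ := (continuousOn_iff'.mp hσc) B hBopen
  set C : Set G := interior (φ '' Fi) ∩ u with hCdef
  have himg : φ '' B = C := by
    apply Subset.antisymm
    · rintro _ ⟨w, hwB, rfl⟩
      refine ⟨hwB.2, ?_⟩
      have h1 : φ w ∈ σ ⁻¹' B ∩ φ '' Fi := by
        refine ⟨?_, ⟨w, hBFi hwB, rfl⟩⟩
        rw [mem_preimage, hσf w (hBFi hwB)]
        exact hwB
      rw [hueq] at h1
      exact h1.1
    · rintro z ⟨hz1, hz2⟩
      have hzFi : z ∈ φ '' Fi := interior_subset hz1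
      have h1 : z ∈ σ ⁻¹' B ∩ φ '' Fi := by rw [hueq]; exact ⟨hz2, hzFi⟩
      exact ⟨σ z, h1.1, (hσm z hzFi).2⟩
  exact ⟨B, C, hBopen, hxB, isOpen_interior.inter huopen, himg,
    hσc.mono (inter_subset_left.trans interior_subset),
    fun z hz => (hσm z (interior_subset hz.1)).2,
    fun w hw => hσf w (hBFi hw)⟩

lemma good_transfer {F G : Type*} [TopologicalSpace F] [TopologicalSpace G]
    [CompactSpace G] [T2Space G]
    (hG : IsGraphSpace G) {φ : F → G} (hφ : Continuous φ)
    {A : Set G} (hA : IsRegularSet A)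
    {x : F} (hxA : φ x ∈ A)
    {B : Set F} {C : Set G} {σ : G → F}
    (hB : IsOpen B) (hxB : x ∈ B) (hC : IsOpen C)
    (himg : φ '' B = C)
    (hσc : ContinuousOn σ C) (hσφ : ∀ z ∈ C, φ (σ z) = z) (hφσ : ∀ w ∈ B, σ (φ w) = w) :
    (x ∈ frontier (φ ⁻¹' A) ↔ φ x ∈ frontier A) ∧
    ∃ T, IsPreconnected T ∧ x ∈ T ∧ T ⊆ φ ⁻¹' A ∧ T.Nontrivial ∧
      ∃ O, IsOpen O ∧ x ∈ O ∧ (φ ⁻¹' A) ∩ O ⊆ T := by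
  obtain ⟨n, f, hf, hcov, hint⟩ := hG
  have hAcl : IsClosed A := hA.1
  have hA'cl : IsClosed (φ ⁻¹' A) := hAcl.preimage hφ
  have hxC : φ x ∈ C := himg ▸ ⟨x, hxB, rfl⟩
  have himgV : ∀ V : Set F, IsOpen V → V ⊆ B → IsOpen (φ '' V) ∧ φ '' V = C ∩ σ ⁻¹' V := by
    intro V hVopen hVB
    have hchar : φ '' V = C ∩ σ ⁻¹' V := by
      apply Subset.antisymm
      · rintro _ ⟨w, hwV, rfl⟩
        refine ⟨himg ▸ ⟨w, hVB hwV, rfl⟩, ?_⟩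
        rw [mem_preimage, hφσ w (hVB hwV)]
        exact hwV
      · rintro z ⟨hzC, hzV⟩
        exact ⟨σ z, hzV, hσφ z hzC⟩
    obtain ⟨u, huopen, hueq⟩ := (continuousOn_iff'.mp hσc) V hVopen
    have : C ∩ σ ⁻¹' V = C ∩ u := by
      rw [inter_comm C, hueq, inter_comm]
    refine ⟨?_, hchar⟩
    rw [hchar, this]
    exact hC.inter huopen
  constructor
  · constructor
    · intro hfr
      rw [hA'cl.frontier_eq] at hfr
      rw [hAcl.frontier_eq]
      refine ⟨hxA, fun hintA => hfr.2 ?_⟩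
      exact interior_maximal (preimage_mono interior_subset) (isOpen_interior.preimage hφ)
        hintA
    · intro hfr
      rw [hAcl.frontier_eq] at hfr
      rw [hA'cl.frontier_eq]
      refine ⟨hxA, fun hintA' => hfr.2 ?_⟩
      set V : Set F := interior (φ ⁻¹' A) ∩ B with hV
      have hVopen : IsOpen V := isOpen_interior.inter hB
      obtain ⟨hopen2, hchar2⟩ := himgV V hVopen inter_subset_right
      have hsubA : φ '' V ⊆ A := by
        rintro _ ⟨w, hwV, rfl⟩
        exact mem_preimage.mp (interior_subset hwV.1)
      exact interior_maximal hsubA hopen2 ⟨x, ⟨hintA', hxB⟩, rfl⟩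
  · obtain ⟨T, hTpc, hxT, hTsub, O, hOopen, hxO, hOsub⟩ :=
      graph_mgl hf hcov hint hA hxA hC hxC
    refine ⟨σ '' T, hTpc.image σ (hσc.mono (hTsub.trans inter_subset_right)),
      ⟨φ x, hxT, hφσ x hxB⟩, ?_, ?_, B ∩ φ ⁻¹' O, hB.inter (hOopen.preimage hφ),
      ⟨hxB, hxO⟩, ?_⟩
    · rintro _ ⟨z, hzT, rfl⟩
      rw [mem_preimage, hσφ z (hTsub hzT).2]
      exact (hTsub hzT).1
    · -- nontrivial
      obtain ⟨z, ⟨hz1, hz2⟩, hz3⟩ := preconn_accum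
        (isPreconnected_connectedComponentIn (F := A) (x := φ x))
        (mem_connectedComponentIn hxA) (hA.2.2 _ hxA) (hOopen.inter hC) ⟨hxO, hxC⟩
      have hzT : z ∈ T := hOsub ⟨connectedComponentIn_subset _ _ hz1, hz2.1⟩
      refine ⟨σ z, ⟨z, hzT, rfl⟩, x, ⟨φ x, hxT, hφσ x hxB⟩, fun he => hz3 ?_⟩
      have h1 : φ (σ z) = z := hσφ z hz2.2
      rw [← h1, he]
    · rintro w ⟨hwA, hwB, hwO⟩
      have : φ w ∈ T := hOsub ⟨hwA, hwO⟩
      exact ⟨φ w, this, hφσ w hwB⟩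

end Aux

/-- preimages of straight sets under simple folds are straight, with the
stated end set. -/
theorem stmt14 (F G : Type*) [TopologicalSpace F] [TopologicalSpace G]
    [CompactSpace F] [T2Space F] [CompactSpace G] [T2Space G]
    (hF : IsGraphSpace F) (hG : IsGraphSpace G)
    (φ : F → G) (F1 F2 F3 : Set F) (h : IsSimpleFold φ F1 F2 F3)
    (S : Set (G × unitInterval)) (hS : IsStraight S)
    (hyp : frontier (Prod.fst '' S) ∩ frontier (φ '' F2) = ∅ ∨
      ∃ V : Set G, IsOpen V ∧ frontier (Prod.fst '' S) ∩ frontier (φ '' F2) ⊆ V ∧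
        (φ '' F2) ∩ V ⊆ (Prod.fst '' S) ∩ V) :
    IsStraight (Prod.map φ id ⁻¹' S) ∧
    endSet (Prod.map φ id ⁻¹' S) =
      (Prod.map φ id ⁻¹' endSet S) \ (frontier F2 ×ˢ (Set.univ : Set unitInterval)) := by
  obtain ⟨hφc, hcov, ⟨hne1, hne2, hne3⟩, ⟨hr1, hr2, hr3⟩, hunion, hG2eq, hsep,
    ⟨hh1, hh2, hh3⟩, hfr1, hfr3, h13⟩ := h
  obtain ⟨hScl, hSinj, hSreg⟩ := hS
  set A : Set G := Prod.fst '' S with hAdef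
  set A' : Set F := φ ⁻¹' A with hA'def
  set S' : Set (F × unitInterval) := Prod.map φ id ⁻¹' S with hS'def
  have hAcl : IsClosed A := hSreg.1
  have hA'cl : IsClosed A' := hAcl.preimage hφc
  -- sections
  obtain ⟨σ1, hσ1c, hσ1m, hσ1f, hF1cl⟩ := section_of_embedding hφc hh1.2 hr1.1 hne1
  obtain ⟨σ2, hσ2c, hσ2m, hσ2f, hF2cl⟩ := section_of_embedding hφc hh2.2 hr2.1 hne2
  obtain ⟨σ3, hσ3c, hσ3m, hσ3f, hF3cl⟩ := section_of_embedding hφc hh3.2 hr3.1 hne3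
  set G1 : Set G := φ '' F1 with hG1def
  set G2 : Set G := φ '' F2 with hG2def
  set G3 : Set G := φ '' F3 with hG3def
  have hG1cl : IsClosed G1 := hr1.1
  have hG2cl : IsClosed G2 := hr2.1
  have hG3cl : IsClosed G3 := hr3.1
  have hG2sub1 : G2 ⊆ G1 := hG2eq ▸ inter_subset_left
  have hG2sub3 : G2 ⊆ G3 := hG2eq ▸ inter_subset_right
  have hInj1 : Set.InjOn φ F1 := Set.injOn_iff_injective.mpr hh1.2.injective
  have hInj2 : Set.InjOn φ F2 := Set.injOn_iff_injective.mpr hh2.2.injective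
  have hInj3 : Set.InjOn φ F3 := Set.injOn_iff_injective.mpr hh3.2.injective
  have hmemF : ∀ w : F, w ∈ F1 ∨ w ∈ F2 ∨ w ∈ F3 := by
    intro w
    have : w ∈ F1 ∪ F2 ∪ F3 := hcov ▸ mem_univ w
    rcases this with (h | h) | h
    · exact Or.inl h
    · exact Or.inr (Or.inl h)
    · exact Or.inr (Or.inr h)
  have hcompl1 : G1ᶜ = G3 \ G2 := by
    apply Subset.antisymm
    · intro z hz
      have hz3 : z ∈ G3 := by
        have : z ∈ G1 ∪ G3 := hunion ▸ mem_univ z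
        rcases this with h | h
        · exact absurd h hz
        · exact h
      exact ⟨hz3, fun hz2 => hz (hG2sub1 hz2)⟩
    · rintro z ⟨hz3, hz2⟩ hz1
      exact hz2 (hG2eq ▸ ⟨hz1, hz3⟩)
  have hcompl3 : G3ᶜ = G1 \ G2 := by
    apply Subset.antisymm
    · intro z hz
      have hz1 : z ∈ G1 := by
        have : z ∈ G1 ∪ G3 := hunion ▸ mem_univ z
        rcases this with h | h
        · exact h
        · exact absurd h hz
      exact ⟨hz1, fun hz2 => hz (hG2sub3 hz2)⟩
    · rintro z ⟨hz1, hz2⟩ hz3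
      exact hz2 (hG2eq ▸ ⟨hz1, hz3⟩)
  have hsep' : closure (G1ᶜ) ∩ closure (G3ᶜ) = ∅ := by
    rw [hcompl1, hcompl3, inter_comm]
    exact hsep
  have hfrG1 : frontier G1 ⊆ G2 := by
    intro z hz
    rw [frontier_eq_closure_inter_closure] at hz
    have hz1 : z ∈ G1 := hG1cl.closure_eq ▸ hz.1
    have hz3 : z ∈ G3 := by
      have := hz.2
      rw [hcompl1] at this
      exact closure_minimal diff_subset hG3cl this
    exact hG2eq ▸ ⟨hz1, hz3⟩
  have hfrG3 : frontier G3 ⊆ G2 := by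
    intro z hz
    rw [frontier_eq_closure_inter_closure] at hz
    have hz3 : z ∈ G3 := hG3cl.closure_eq ▸ hz.1
    have hz1 : z ∈ G1 := by
      have := hz.2
      rw [hcompl3] at this
      exact closure_minimal diff_subset hG1cl this
    exact hG2eq ▸ ⟨hz1, hz3⟩
  have hfrG2 : frontier G2 ⊆ frontier G1 ∪ frontier G3 := by
    intro z hz
    rw [frontier_eq_closure_inter_closure] at hz
    have hz2 : z ∈ G2 := hG2cl.closure_eq ▸ hz.1
    have hzc : z ∈ closure (G1ᶜ) ∪ closure (G3ᶜ) := by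
      rw [← closure_union]
      refine closure_mono ?_ hz.2
      intro w hw
      rw [hG2eq, compl_inter] at hw
      exact hw
    rcases hzc with h1 | h1
    · left
      rw [frontier_eq_closure_inter_closure]
      exact ⟨subset_closure (hG2sub1 hz2), h1⟩
    · right
      rw [frontier_eq_closure_inter_closure]
      exact ⟨subset_closure (hG2sub3 hz2), h1⟩
  obtain ⟨nG, fG, hfG, hcovG, hintG⟩ := id hG
  -- NO SPUR: points of F1 ∩ F2 (resp. F2 ∩ F3) are not interior to F2
  have hnospur : ∀ x ∈ F1 ∩ F2, x ∉ interior F2 := by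
    rintro x ⟨hx1, hx2⟩ hxint
    have hyfr : φ x ∈ frontier G1 := hfr1 ▸ ⟨x, ⟨hx1, hx2⟩, rfl⟩
    set Cc : Set G := connectedComponentIn G1 (φ x) with hCc
    have hyG1 : φ x ∈ G1 := ⟨x, hx1, rfl⟩
    have hCccpt : IsCompact Cc := isCompact_connectedComponentIn hG1cl.isCompact _
    have hCcnt : Cc.Nontrivial := hr1.2.2 _ hyG1
    have hCcsub : Cc ⊆ G1 := connectedComponentIn_subset _ _
    set K1 : Set F := σ1 '' Cc with hK1
    have hK1pc : IsPreconnected K1 :=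
      (isPreconnected_connectedComponentIn).image σ1 (hσ1c.mono hCcsub)
    have hK1cpt : IsCompact K1 := hCccpt.image_of_continuousOn (hσ1c.mono hCcsub)
    have hxK1 : x ∈ K1 := ⟨φ x, mem_connectedComponentIn hyG1, hσ1f x hx1⟩
    have hK1F1 : K1 ⊆ F1 := by
      rintro _ ⟨z, hz, rfl⟩
      exact (hσ1m z (hCcsub hz)).1
    have hK1inj : Set.InjOn σ1 Cc := by
      intro a ha b hb hab
      have h1 := (hσ1m a (hCcsub ha)).2
      have h2 := (hσ1m b (hCcsub hb)).2
      rw [← h1, ← h2, hab]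
    obtain ⟨D, hDnhds, hDcl, hDsub⟩ :=
      exists_mem_nhds_isClosed_subset (isOpen_interior.mem_nhds hxint)
    have hxintD : x ∈ interior D := mem_interior_iff_mem_nhds.mpr hDnhds
    have hQ : ∃ Q : Set F, IsPreconnected Q ∧ Q.Nontrivial ∧ Q ⊆ F1 ∩ F2 := by
      rcases Classical.em (K1 ⊆ D) with hKD | hKD
      · refine ⟨K1, hK1pc, ?_, fun w hw => ⟨hK1F1 hw, interior_subset (hDsub (hKD hw))⟩⟩
        obtain ⟨a, ha, b, hb, hab⟩ := hCcnt
        exact ⟨σ1 a, ⟨a, ha, rfl⟩, σ1 b, ⟨b, hb, rfl⟩, fun he => hab (hK1inj ha hb he)⟩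
      · obtain ⟨w, hwC, hwcl⟩ := bumping hK1cpt hK1pc hDcl hxK1 (mem_of_mem_nhds hDnhds) hKD
        refine ⟨connectedComponentIn (K1 ∩ D) x, isPreconnected_connectedComponentIn,
          ⟨w, hwC, x, mem_connectedComponentIn ⟨hxK1, mem_of_mem_nhds hDnhds⟩, ?_⟩, ?_⟩
        · intro hwx
          rw [hwx] at hwcl
          have : x ∉ closure (K1 \ D) := by
            intro hc
            have hsub2 : K1 \ D ⊆ (interior D)ᶜ :=
              fun z hz => fun hzi => hz.2 (interior_subset hzi)
            exact (closure_minimal hsub2 (isOpen_interior.isClosed_compl) hc) hxintD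
          exact this hwcl
        · intro w hw
          have := connectedComponentIn_subset (K1 ∩ D) x hw
          exact ⟨hK1F1 this.1, interior_subset (hDsub this.2)⟩
    obtain ⟨Q, hQpc, hQnt, hQsub⟩ := hQ
    have hPnt : (φ '' Q).Nontrivial := by
      obtain ⟨a, ha, b, hb, hab⟩ := hQnt
      exact ⟨φ a, ⟨a, ha, rfl⟩, φ b, ⟨b, hb, rfl⟩,
        fun he => hab (hInj1 (hQsub ha).1 (hQsub hb).1 he)⟩
    have hPsub : φ '' Q ⊆ frontier (G1ᶜ) := by
      rw [frontier_compl]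
      rw [hfr1]
      exact image_mono hQsub
    have := graph_nfc hfG hcovG hintG hG1cl.isOpen_compl
      (hQpc.image φ hφc.continuousOn) hPsub
    obtain ⟨a, ha, b, hb, hab⟩ := hPnt
    exact hab (this ha hb)
  have hnospur3 : ∀ x ∈ F2 ∩ F3, x ∉ interior F2 := by
    rintro x ⟨hx2, hx3⟩ hxint
    have hyfr : φ x ∈ frontier G3 := hfr3 ▸ ⟨x, ⟨hx2, hx3⟩, rfl⟩
    set Cc : Set G := connectedComponentIn G3 (φ x) with hCc
    have hyG3 : φ x ∈ G3 := ⟨x, hx3, rfl⟩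
    have hCccpt : IsCompact Cc := isCompact_connectedComponentIn hG3cl.isCompact _
    have hCcnt : Cc.Nontrivial := hr3.2.2 _ hyG3
    have hCcsub : Cc ⊆ G3 := connectedComponentIn_subset _ _
    set K1 : Set F := σ3 '' Cc with hK1
    have hK1pc : IsPreconnected K1 :=
      (isPreconnected_connectedComponentIn).image σ3 (hσ3c.mono hCcsub)
    have hK1cpt : IsCompact K1 := hCccpt.image_of_continuousOn (hσ3c.mono hCcsub)
    have hxK1 : x ∈ K1 := ⟨φ x, mem_connectedComponentIn hyG3, hσ3f x hx3⟩
    have hK1F3 : K1 ⊆ F3 := by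
      rintro _ ⟨z, hz, rfl⟩
      exact (hσ3m z (hCcsub hz)).1
    have hK1inj : Set.InjOn σ3 Cc := by
      intro a ha b hb hab
      have h1 := (hσ3m a (hCcsub ha)).2
      have h2 := (hσ3m b (hCcsub hb)).2
      rw [← h1, ← h2, hab]
    obtain ⟨D, hDnhds, hDcl, hDsub⟩ :=
      exists_mem_nhds_isClosed_subset (isOpen_interior.mem_nhds hxint)
    have hxintD : x ∈ interior D := mem_interior_iff_mem_nhds.mpr hDnhds
    have hQ : ∃ Q : Set F, IsPreconnected Q ∧ Q.Nontrivial ∧ Q ⊆ F2 ∩ F3 := by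
      rcases Classical.em (K1 ⊆ D) with hKD | hKD
      · refine ⟨K1, hK1pc, ?_, fun w hw => ⟨interior_subset (hDsub (hKD hw)), hK1F3 hw⟩⟩
        obtain ⟨a, ha, b, hb, hab⟩ := hCcnt
        exact ⟨σ3 a, ⟨a, ha, rfl⟩, σ3 b, ⟨b, hb, rfl⟩, fun he => hab (hK1inj ha hb he)⟩
      · obtain ⟨w, hwC, hwcl⟩ := bumping hK1cpt hK1pc hDcl hxK1 (mem_of_mem_nhds hDnhds) hKD
        refine ⟨connectedComponentIn (K1 ∩ D) x, isPreconnected_connectedComponentIn,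
          ⟨w, hwC, x, mem_connectedComponentIn ⟨hxK1, mem_of_mem_nhds hDnhds⟩, ?_⟩, ?_⟩
        · intro hwx
          rw [hwx] at hwcl
          have : x ∉ closure (K1 \ D) := by
            intro hc
            have hsub2 : K1 \ D ⊆ (interior D)ᶜ :=
              fun z hz => fun hzi => hz.2 (interior_subset hzi)
            exact (closure_minimal hsub2 (isOpen_interior.isClosed_compl) hc) hxintD
          exact this hwcl
        · intro w hw
          have := connectedComponentIn_subset (K1 ∩ D) x hw
          exact ⟨interior_subset (hDsub this.2), hK1F3 this.1⟩
    obtain ⟨Q, hQpc, hQnt, hQsub⟩ := hQ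
    have hPnt : (φ '' Q).Nontrivial := by
      obtain ⟨a, ha, b, hb, hab⟩ := hQnt
      exact ⟨φ a, ⟨a, ha, rfl⟩, φ b, ⟨b, hb, rfl⟩,
        fun he => hab (hInj3 (hQsub ha).2 (hQsub hb).2 he)⟩
    have hPsub : φ '' Q ⊆ frontier (G3ᶜ) := by
      rw [frontier_compl]
      rw [hfr3]
      exact image_mono hQsub
    have := graph_nfc hfG hcovG hintG hG3cl.isOpen_compl
      (hQpc.image φ hφc.continuousOn) hPsub
    obtain ⟨a, ha, b, hb, hab⟩ := hPnt
    exact hab (this ha hb)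
  have hfr2eq : frontier F2 = F1 ∩ F2 ∪ F2 ∩ F3 := by
    apply Subset.antisymm
    · intro z hz
      rw [frontier_eq_closure_inter_closure] at hz
      have hz2 : z ∈ F2 := hF2cl.closure_eq ▸ hz.1
      have hz13 : z ∈ F1 ∪ F3 := by
        have hsub : (F2ᶜ : Set F) ⊆ F1 ∪ F3 := by
          intro w hw
          rcases hmemF w with h | h | h
          · exact Or.inl h
          · exact absurd h hw
          · exact Or.inr h
        exact closure_minimal hsub (hF1cl.union hF3cl) hz.2
      rcases hz13 with h | h
      · exact Or.inl ⟨h, hz2⟩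
      · exact Or.inr ⟨hz2, h⟩
    · rintro z (⟨hz1, hz2⟩ | ⟨hz2, hz3⟩)
      · rw [hF2cl.frontier_eq]
        exact ⟨hz2, hnospur z ⟨hz1, hz2⟩⟩
      · rw [hF2cl.frontier_eq]
        exact ⟨hz2, hnospur3 z ⟨hz2, hz3⟩⟩
    -- BAD points are interior to A'
  have hkeybad : ∀ x : F, φ x ∈ A → x ∈ F1 ∩ F2 ∪ F2 ∩ F3 → x ∈ interior A' := by
    rintro x hxA (⟨hx1, hx2⟩ | ⟨hx2, hx3⟩)
    · have hyfr : φ x ∈ frontier G1 := hfr1 ▸ ⟨x, ⟨hx1, hx2⟩, rfl⟩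
      have hyG2 : φ x ∈ G2 := hfrG1 hyfr
      have hycl : φ x ∈ closure (G1ᶜ) := by
        have h' := hyfr
        rw [frontier_eq_closure_inter_closure] at h'
        exact h'.2
      have hnotcl : φ x ∉ closure (G3ᶜ) := fun hc =>
        (eq_empty_iff_forall_notMem.mp hsep' (φ x)) ⟨hycl, hc⟩
      set W0 : Set G := (closure (G3ᶜ))ᶜ with hW0def
      have hW0open : IsOpen W0 := isClosed_closure.isOpen_compl
      have hW0G1 : ∀ z ∈ W0, z ∈ G1 → z ∈ G2 := by
        intro z hzW hzG1
        by_contra hz2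
        exact hzW (subset_closure (hcompl3 ▸ ⟨hzG1, hz2⟩))
      rcases Classical.em (φ x ∈ interior A) with hyint | hyint
      · exact interior_maximal
          (fun w hw => mem_preimage.mpr (interior_subset (mem_preimage.mp hw)))
          (isOpen_interior.preimage hφc) hyint
      · have hyfrA : φ x ∈ frontier A := by rw [hAcl.frontier_eq]; exact ⟨hxA, hyint⟩
        have hyfrG2 : φ x ∈ frontier G2 := by
          rw [frontier_eq_closure_inter_closure]
          refine ⟨subset_closure hyG2, ?_⟩
          refine closure_mono ?_ hycl
          exact compl_subset_compl.mpr hG2sub1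
        rcases hyp with hyp1 | ⟨V, hVopen, hVsub, hVprop⟩
        · exact absurd ⟨hyfrA, hyfrG2⟩ (eq_empty_iff_forall_notMem.mp hyp1 (φ x))
        · have hyV : φ x ∈ V := hVsub ⟨hyfrA, hyfrG2⟩
          set N : Set F := φ ⁻¹' (W0 ∩ V) ∩ F3ᶜ with hNdef
          have hNopen : IsOpen N := ((hW0open.inter hVopen).preimage hφc).inter
            hF3cl.isOpen_compl
          have hxN : x ∈ N := ⟨⟨hnotcl, hyV⟩, fun hx3 =>
            (eq_empty_iff_forall_notMem.mp h13 x) ⟨hx1, hx3⟩⟩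
          have hNsub : N ⊆ A' := by
            rintro u ⟨⟨huW, huV⟩, hu3⟩
            have huG1 : φ u ∈ G1 := by
              rcases hmemF u with h | h | h
              · exact ⟨u, h, rfl⟩
              · exact hG2sub1 ⟨u, h, rfl⟩
              · exact absurd h hu3
            have huG2 : φ u ∈ G2 := hW0G1 _ huW huG1
            exact (hVprop ⟨huG2, huV⟩).1
          exact interior_maximal hNsub hNopen hxN
    · have hyfr : φ x ∈ frontier G3 := hfr3 ▸ ⟨x, ⟨hx2, hx3⟩, rfl⟩
      have hyG2 : φ x ∈ G2 := hfrG3 hyfr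
      have hycl : φ x ∈ closure (G3ᶜ) := by
        have h' := hyfr
        rw [frontier_eq_closure_inter_closure] at h'
        exact h'.2
      have hnotcl : φ x ∉ closure (G1ᶜ) := fun hc =>
        (eq_empty_iff_forall_notMem.mp hsep' (φ x)) ⟨hc, hycl⟩
      set W0 : Set G := (closure (G1ᶜ))ᶜ with hW0def
      have hW0open : IsOpen W0 := isClosed_closure.isOpen_compl
      have hW0G3 : ∀ z ∈ W0, z ∈ G3 → z ∈ G2 := by
        intro z hzW hzG3
        by_contra hz2
        exact hzW (subset_closure (hcompl1 ▸ ⟨hzG3, hz2⟩))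
      rcases Classical.em (φ x ∈ interior A) with hyint | hyint
      · exact interior_maximal
          (fun w hw => mem_preimage.mpr (interior_subset (mem_preimage.mp hw)))
          (isOpen_interior.preimage hφc) hyint
      · have hyfrA : φ x ∈ frontier A := by rw [hAcl.frontier_eq]; exact ⟨hxA, hyint⟩
        have hyfrG2 : φ x ∈ frontier G2 := by
          rw [frontier_eq_closure_inter_closure]
          refine ⟨subset_closure hyG2, ?_⟩
          refine closure_mono ?_ hycl
          exact compl_subset_compl.mpr hG2sub3
        rcases hyp with hyp1 | ⟨V, hVopen, hVsub, hVprop⟩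
        · exact absurd ⟨hyfrA, hyfrG2⟩ (eq_empty_iff_forall_notMem.mp hyp1 (φ x))
        · have hyV : φ x ∈ V := hVsub ⟨hyfrA, hyfrG2⟩
          set N : Set F := φ ⁻¹' (W0 ∩ V) ∩ F1ᶜ with hNdef
          have hNopen : IsOpen N := ((hW0open.inter hVopen).preimage hφc).inter
            hF1cl.isOpen_compl
          have hxN : x ∈ N := ⟨⟨hnotcl, hyV⟩, fun hx1 =>
            (eq_empty_iff_forall_notMem.mp h13 x) ⟨hx1, hx3⟩⟩
          have hNsub : N ⊆ A' := by
            rintro u ⟨⟨huW, huV⟩, hu1⟩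
            have huG3 : φ u ∈ G3 := by
              rcases hmemF u with h | h | h
              · exact absurd h hu1
              · exact hG2sub3 ⟨u, h, rfl⟩
              · exact ⟨u, h, rfl⟩
            have huG2 : φ u ∈ G2 := hW0G3 _ huW huG3
            exact (hVprop ⟨huG2, huV⟩).1
          exact interior_maximal hNsub hNopen hxN
    -- GOOD points
  have hgood : ∀ x : F, φ x ∈ A → x ∉ F1 ∩ F2 ∪ F2 ∩ F3 →
      ((x ∈ frontier A' ↔ φ x ∈ frontier A) ∧
        ∃ T, IsPreconnected T ∧ x ∈ T ∧ T ⊆ A' ∧ T.Nontrivial ∧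
          ∃ O, IsOpen O ∧ x ∈ O ∧ A' ∩ O ⊆ T) := by
    intro x hxA hnot
    have hn12 : ¬(x ∈ F1 ∧ x ∈ F2) := fun hc => hnot (Or.inl ⟨hc.1, hc.2⟩)
    have hn23 : ¬(x ∈ F2 ∧ x ∈ F3) := fun hc => hnot (Or.inr ⟨hc.1, hc.2⟩)
    rcases hmemF x with hx1 | hx2 | hx3
    · -- x ∈ F1, x ∉ F2, x ∉ F3
      have hxn2 : x ∉ F2 := fun hh => hn12 ⟨hx1, hh⟩
      have hxn3 : x ∉ F3 := fun hh => (eq_empty_iff_forall_notMem.mp h13 x) ⟨hx1, hh⟩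
      have hU0open : IsOpen ((F2 ∪ F3)ᶜ) := (hF2cl.union hF3cl).isOpen_compl
      have hxU0 : x ∈ (F2 ∪ F3)ᶜ := fun hh => hh.elim hxn2 hxn3
      have hU0sub : (F2 ∪ F3)ᶜ ⊆ F1 := by
        intro w hw
        rcases hmemF w with h | h | h
        · exact h
        · exact absurd (Or.inl h) hw
        · exact absurd (Or.inr h) hw
      have hyint : φ x ∈ interior G1 := by
        by_contra hh
        have hfr : φ x ∈ frontier G1 := by
          rw [hG1cl.frontier_eq]
          exact ⟨⟨x, hx1, rfl⟩, hh⟩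
        rw [hfr1] at hfr
        obtain ⟨w, hw, hwe⟩ := hfr
        exact hxn2 ((hInj1 hx1 hw.1 hwe.symm) ▸ hw.2)
      obtain ⟨B, C, hB, hxB, hC, himg, hσc, hσφ, hφσ⟩ :=
        mk_good_piece hσ1c hσ1m hσ1f hx1 hU0open hxU0 hU0sub hφc hyint
      exact good_transfer hG hφc hSreg hxA hB hxB hC himg hσc hσφ hφσ
    · -- x ∈ F2, x ∉ F1, x ∉ F3
      have hxn1 : x ∉ F1 := fun hh => hn12 ⟨hh, hx2⟩
      have hxn3 : x ∉ F3 := fun hh => hn23 ⟨hx2, hh⟩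
      have hU0open : IsOpen ((F1 ∪ F3)ᶜ) := (hF1cl.union hF3cl).isOpen_compl
      have hxU0 : x ∈ (F1 ∪ F3)ᶜ := fun hh => hh.elim hxn1 hxn3
      have hU0sub : (F1 ∪ F3)ᶜ ⊆ F2 := by
        intro w hw
        rcases hmemF w with h | h | h
        · exact absurd (Or.inl h) hw
        · exact h
        · exact absurd (Or.inr h) hw
      have hyint : φ x ∈ interior G2 := by
        by_contra hh
        have hfr : φ x ∈ frontier G2 := by
          rw [hG2cl.frontier_eq]
          exact ⟨⟨x, hx2, rfl⟩, hh⟩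
        rcases hfrG2 hfr with h1 | h1
        · rw [hfr1] at h1
          obtain ⟨w, hw, hwe⟩ := h1
          exact hxn1 ((hInj2 hx2 hw.2 hwe.symm) ▸ hw.1)
        · rw [hfr3] at h1
          obtain ⟨w, hw, hwe⟩ := h1
          exact hxn3 ((hInj2 hx2 hw.1 hwe.symm) ▸ hw.2)
      obtain ⟨B, C, hB, hxB, hC, himg, hσc, hσφ, hφσ⟩ :=
        mk_good_piece hσ2c hσ2m hσ2f hx2 hU0open hxU0 hU0sub hφc hyint
      exact good_transfer hG hφc hSreg hxA hB hxB hC himg hσc hσφ hφσ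
    · -- x ∈ F3, x ∉ F2, x ∉ F1
      have hxn2 : x ∉ F2 := fun hh => hn23 ⟨hh, hx3⟩
      have hxn1 : x ∉ F1 := fun hh => (eq_empty_iff_forall_notMem.mp h13 x) ⟨hh, hx3⟩
      have hU0open : IsOpen ((F1 ∪ F2)ᶜ) := (hF1cl.union hF2cl).isOpen_compl
      have hxU0 : x ∈ (F1 ∪ F2)ᶜ := fun hh => hh.elim hxn1 hxn2
      have hU0sub : (F1 ∪ F2)ᶜ ⊆ F3 := by
        intro w hw
        rcases hmemF w with h | h | h
        · exact absurd (Or.inl h) hw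
        · exact absurd (Or.inr h) hw
        · exact h
      have hyint : φ x ∈ interior G3 := by
        by_contra hh
        have hfr : φ x ∈ frontier G3 := by
          rw [hG3cl.frontier_eq]
          exact ⟨⟨x, hx3, rfl⟩, hh⟩
        rw [hfr3] at hfr
        obtain ⟨w, hw, hwe⟩ := hfr
        exact hxn2 ((hInj3 hx3 hw.2 hwe.symm) ▸ hw.1)
      obtain ⟨B, C, hB, hxB, hC, himg, hσc, hσφ, hφσ⟩ :=
        mk_good_piece hσ3c hσ3m hσ3f hx3 hU0open hxU0 hU0sub hφc hyint
      exact good_transfer hG hφc hSreg hxA hB hxB hC himg hσc hσφ hφσ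
    -- image of S' under fst
  have himgS' : Prod.fst '' S' = A' := by
    apply Subset.antisymm
    · rintro _ ⟨⟨x, t⟩, hmem, rfl⟩
      exact mem_preimage.mpr ⟨(φ x, t), hmem, rfl⟩
    · intro x hx
      obtain ⟨⟨z, t⟩, hzt, hz⟩ := mem_preimage.mp hx
      have : (x, t) ∈ S' := by
        simp only [hS'def, mem_preimage, Prod.map_apply, id_eq]
        rw [show φ x = z from hz.symm]
        exact hzt
      exact ⟨(x, t), this, rfl⟩
  obtain ⟨nF, fF, hfF, hcovF, hintF⟩ := id hF
  -- per-point structure of A'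
  have hper : ∀ x ∈ A', ∃ T, IsPreconnected T ∧ x ∈ T ∧ T ⊆ A' ∧ T.Nontrivial ∧
      ∃ O, IsOpen O ∧ x ∈ O ∧ A' ∩ O ⊆ T := by
    intro x hxA'
    rcases Classical.em (x ∈ F1 ∩ F2 ∪ F2 ∩ F3) with hbad | hgoodx
    · have hint' : x ∈ interior A' := hkeybad x hxA' hbad
      obtain ⟨T, hTpc, hxT, hTsub, O, hOopen, hxO, hOT⟩ :=
        graph_wlc hfF hcovF hintF x isOpen_interior hint'
      obtain ⟨z, hzO, hzx⟩ := graph_exists_ne hF x hOopen hxO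
      exact ⟨T, hTpc, hxT, hTsub.trans interior_subset,
        ⟨z, hOT hzO, x, hxT, hzx⟩, O, hOopen, hxO, fun w hw => hOT hw.2⟩
    · exact (hgood x hxA' hgoodx).2
  have hstraight : IsStraight S' := by
    refine ⟨hScl.preimage (hφc.prodMap continuous_id), ?_, ?_⟩
    · rintro ⟨x, t⟩ hxt ⟨x', t'⟩ hxt' (he : x = x')
      subst he
      have h1 : (φ x, t) ∈ S := hxt
      have h2 : (φ x, t') ∈ S := hxt'
      have := hSinj h1 h2 rfl
      have ht : t = t' := congrArg Prod.snd this
      rw [ht]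
    · rw [himgS']
      refine ⟨hA'cl, ?_, ?_⟩
      · -- finiteness of components
        have hA'cpt : IsCompact A' := hA'cl.isCompact
        have hchoice : ∀ w : ↥A', ∃ O : Set F, IsOpen O ∧ w.1 ∈ O ∧
            A' ∩ O ⊆ connectedComponentIn A' w.1 := by
          rintro ⟨w, hw⟩
          obtain ⟨T, hTpc, hxT, hTsub, _, O, hOopen, hxO, hOT⟩ := hper w hw
          exact ⟨O, hOopen, hxO,
            fun z hz => (hTpc.subset_connectedComponentIn hxT hTsub) (hOT hz)⟩
        choose O hOopen hOmem hOsub using hchoice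
        have hcover : A' ⊆ ⋃ w : ↥A', O w := fun z hz => mem_iUnion.mpr ⟨⟨z, hz⟩, hOmem ⟨z, hz⟩⟩
        obtain ⟨s, hs⟩ := hA'cpt.elim_finite_subcover O hOopen hcover
        apply Set.Finite.subset ((s.finite_toSet).image
          (fun w => connectedComponentIn A' w.1))
        rintro _ ⟨z, hz, rfl⟩
        obtain ⟨w, hws, hzw⟩ := by
          simpa only [mem_iUnion, exists_prop] using hs hz
        have : z ∈ connectedComponentIn A' w.1 := hOsub w ⟨hz, hzw⟩
        exact ⟨w, hws, connectedComponentIn_eq this⟩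
      · intro x hx
        obtain ⟨T, hTpc, hxT, hTsub, hTnt, _⟩ := hper x hx
        exact hTnt.mono (hTpc.subset_connectedComponentIn hxT hTsub)
  refine ⟨hstraight, ?_⟩
  ext ⟨x, t⟩
  simp only [endSet, mem_inter_iff, mem_preimage, mem_diff, Prod.map_apply, id_eq, mem_prod,
    mem_univ, and_true]
  rw [himgS']
  constructor
  · rintro ⟨hmem, hfr⟩
    have hxA : φ x ∈ A := ⟨(φ x, t), hmem, rfl⟩
    rcases Classical.em (x ∈ F1 ∩ F2 ∪ F2 ∩ F3) with hbad | hgoodx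
    · exfalso
      have hint' : x ∈ interior A' := hkeybad x hxA hbad
      rw [hA'cl.frontier_eq] at hfr
      exact hfr.2 hint'
    · refine ⟨⟨hmem, ((hgood x hxA hgoodx).1).mp hfr⟩, ?_⟩
      intro hfr2
      rw [hfr2eq] at hfr2
      exact hgoodx hfr2
  · rintro ⟨⟨hmem, hfrA⟩, hnfr2⟩
    have hmem' : (x, t) ∈ S' := hmem
    have hxA : φ x ∈ A := ⟨(φ x, t), hmem, rfl⟩
    refine ⟨hmem', ?_⟩
    rcases Classical.em (x ∈ F1 ∩ F2 ∪ F2 ∩ F3) with hbad | hgoodx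
    · exact absurd (hfr2eq ▸ hbad) hnfr2
    · exact ((hgood x hxA hgoodx).1).mpr hfrA
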